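/- arXiv:2312.06443 — 3 statements merged into one kernel-verified Lean document; each statement's English description precedes it below -/
import Mathlib

section
/- For every integer k ≥ 3 there exists a combinatorial auction whose winner set W has size k such that: (i) some element of the core U assigns strictly positive utility to every winner in W; yet (ii) every element of U that maximizes ∑_{i∈N} π_i over U (every MRC outcome) assigns utility 0 to at least k − 2 winners. -/
/-- The vector `x` sorted in nondecreasing order. -/
noncomputable def sortVec {n : ℕ} (x : Fin n → ℝ) : Fin n → ℝ := x ∘ Tuple.sort x

/-- `x` leximin-dominates `y`. -/
def LexDom {n : ℕ} (x y : Fin n → ℝ) : Prop :=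
  ∃ k : Fin n, (∀ j : Fin n, j < k → sortVec x j = sortVec y j) ∧ sortVec y k < sortVec x k

/-- The core polytope of a coalition value function `w`. -/
def CorePoly {n : ℕ} (w : Finset (Fin n) → ℝ) : Set (Fin n → ℝ) :=
  {π | (∀ i, 0 ≤ π i) ∧ ∀ S : Finset (Fin n), ∑ i ∈ Finset.univ \ S, π i ≤ w Finset.univ - w S}

/-- An allocation to the coalition `S`: pairwise disjoint bundles of items. -/
def IsAlloc {n m : ℕ} (S : Finset (Fin n)) (a : Fin n → Finset (Fin m)) : Prop :=
  ∀ i ∈ S, ∀ j ∈ S, i ≠ j → Disjoint (a i) (a j)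

/-- The coalition value: the maximum total value over allocations to `S`. -/
noncomputable def coalW {n m : ℕ} (v : Fin n → Finset (Fin m) → ℝ) (S : Finset (Fin n)) : ℝ :=
  sSup (Set.image (fun a : Fin n → Finset (Fin m) => ∑ i ∈ S, v i (a i)) {a | IsAlloc S a})

/-- The set of winners: bidders whose removal strictly decreases the optimal welfare. -/
noncomputable def winners {n m : ℕ} (v : Fin n → Finset (Fin m) → ℝ) : Finset (Fin n) :=
  @Finset.filter _ (fun i => coalW v (Finset.univ \ {i}) < coalW v Finset.univ)
    (Classical.decPred _) Finset.univ
namespace MRCAux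

/-- bundle of all items except item `e` -/
def bund (k e : ℕ) : Finset (Fin k) := Finset.univ.filter (fun j => (j : ℕ) ≠ e)

/-- the valuations -/
noncomputable def V (k : ℕ) (i : Fin (k+2)) (S : Finset (Fin k)) : ℝ :=
  if hi : (i : ℕ) < k then (if (⟨(i : ℕ), hi⟩ : Fin k) ∈ S then 1 else 0)
  else if (i : ℕ) = k then (if bund k (k-1) ⊆ S then (k:ℝ) - 2 else 0)
  else (if bund k (k-2) ⊆ S then (k:ℝ) - 2 else 0)

def bA (k : ℕ) : Fin (k+2) := ⟨k-2, by omega⟩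
def bB (k : ℕ) : Fin (k+2) := ⟨k-1, by omega⟩
def bLA (k : ℕ) : Fin (k+2) := ⟨k, by omega⟩
def bLB (k : ℕ) : Fin (k+2) := ⟨k+1, by omega⟩

variable {k : ℕ}

lemma card_lt (k c : ℕ) (hc : c ≤ k + 2) :
    (Finset.univ.filter (fun i : Fin (k+2) => (i : ℕ) < c)).card = c := by
  apply Finset.card_eq_of_bijective (fun i hi => (⟨i, by omega⟩ : Fin (k+2)))
  · intro a ha
    simp only [Finset.mem_filter, Finset.mem_univ, true_and] at ha
    exact ⟨(a : ℕ), ha, by apply Fin.ext; simp⟩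
  · intro i hi
    simp only [Finset.mem_filter, Finset.mem_univ, true_and]
    exact hi
  · intro i j hi hj h
    simpa [Fin.ext_iff] using h

lemma V_empty (hk : 3 ≤ k) (i : Fin (k+2)) : V k i ∅ = 0 := by
  have h0 : (⟨0, by omega⟩ : Fin k) ∈ bund k (k-1) := by
    simp only [bund, Finset.mem_filter, Finset.mem_univ, true_and]; omega
  have h0' : (⟨0, by omega⟩ : Fin k) ∈ bund k (k-2) := by
    simp only [bund, Finset.mem_filter, Finset.mem_univ, true_and]; omega
  unfold V
  split
  · simp
  · split
    · rw [if_neg]; intro hsub; exact absurd (hsub h0) (by simp)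
    · rw [if_neg]; intro hsub; exact absurd (hsub h0') (by simp)

lemma V_nonneg (hk : 3 ≤ k) (i : Fin (k+2)) (S : Finset (Fin k)) : 0 ≤ V k i S := by
  have : (3:ℝ) ≤ (k:ℝ) := by exact_mod_cast hk
  unfold V
  split
  · split <;> norm_num
  · split <;> split <;> linarith

lemma V_real_le_one (i : Fin (k+2)) (hi : (i : ℕ) < k) (S : Finset (Fin k)) : V k i S ≤ 1 := by
  unfold V
  rw [dif_pos hi]
  split <;> norm_num

lemma V_loser_le (hk : 3 ≤ k) (i : Fin (k+2)) (hi : ¬ (i : ℕ) < k) (S : Finset (Fin k)) :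
    V k i S ≤ (k:ℝ) - 2 := by
  have : (3:ℝ) ≤ (k:ℝ) := by exact_mod_cast hk
  unfold V
  rw [dif_neg hi]
  split <;> split <;> linarith


/-- key upper bound on the value of any allocation to a coalition `S` -/
lemma sum_bound (hk : 3 ≤ k) (S : Finset (Fin (k+2))) (a : Fin (k+2) → Finset (Fin k))
    (ha : IsAlloc S a) :
    ∑ i ∈ S, V k i (a i) ≤
      max ((S.filter (fun i : Fin (k+2) => (i : ℕ) < k)).card : ℝ)
        ((k:ℝ) - 2 + (if (bA k ∈ S ∨ bB k ∈ S) then 1 else 0)) := by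
  have hk3 : (3:ℝ) ≤ (k:ℝ) := by exact_mod_cast hk
  by_cases hLA : bLA k ∈ S ∧ bund k (k-1) ⊆ a (bLA k)
  · -- loser A takes its bundle: only bidder bB can additionally earn
    obtain ⟨hmem, hsub⟩ := hLA
    have hdecomp : ∑ i ∈ S, V k i (a i)
        = V k (bLA k) (a (bLA k)) + ∑ i ∈ S.erase (bLA k), V k i (a i) :=
      (Finset.add_sum_erase S _ hmem).symm
    have hterm : ∀ i ∈ S.erase (bLA k), V k i (a i) ≤ (if i = bB k then 1 else 0) := by
      intro i hi
      obtain ⟨hne, hiS⟩ := Finset.mem_erase.mp hi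
      by_cases hB : i = bB k
      · rw [if_pos hB]
        exact V_real_le_one i (by simp [hB, bB]; omega) _
      · rw [if_neg hB]
        have hdisj : Disjoint (a i) (a (bLA k)) := ha i hiS (bLA k) hmem hne
        by_cases hir : (i : ℕ) < k
        · -- real bidder other than bB: its item is in loser A's bundle
          have hitem : (⟨(i:ℕ), hir⟩ : Fin k) ∈ a (bLA k) := by
            apply hsub
            simp only [bund, Finset.mem_filter, Finset.mem_univ, true_and]
            intro hc
            exact hB (by apply Fin.ext; simp [bB]; omega)
          have hnot : (⟨(i:ℕ), hir⟩ : Fin k) ∉ a i :=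
            fun hin => (Finset.disjoint_left.mp hdisj hin) hitem
          unfold V
          rw [dif_pos hir, if_neg hnot]
        · -- i must be the other loser bLB; its bundle meets loser A's bundle
          have hiv : (i : ℕ) = k + 1 := by
            have := i.isLt
            have hne' : (i : ℕ) ≠ k := fun hc => hne (by apply Fin.ext; simp [bLA]; omega)
            omega
          have : ¬ bund k (k-2) ⊆ a i := by
            intro hsub'
            have h1 : (⟨0, by omega⟩ : Fin k) ∈ a (bLA k) := by
              apply hsub
              simp only [bund, Finset.mem_filter, Finset.mem_univ, true_and]; omega
            have h2 : (⟨0, by omega⟩ : Fin k) ∈ a i := by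
              apply hsub'
              simp only [bund, Finset.mem_filter, Finset.mem_univ, true_and]; omega
            exact (Finset.disjoint_left.mp hdisj h2) h1
          unfold V
          rw [dif_neg (by omega), if_neg (by omega), if_neg this]
    have hsum2 : ∑ i ∈ S.erase (bLA k), V k i (a i)
        ≤ ∑ i ∈ S.erase (bLA k), (if i = bB k then (1:ℝ) else 0) :=
      Finset.sum_le_sum hterm
    have hsum3 : ∑ i ∈ S.erase (bLA k), (if i = bB k then (1:ℝ) else 0)
        = if bB k ∈ S.erase (bLA k) then 1 else 0 := Finset.sum_ite_eq' _ _ _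
    have hVle : V k (bLA k) (a (bLA k)) ≤ (k:ℝ) - 2 :=
      V_loser_le hk _ (by simp [bLA]) _
    have hle1 : (if bB k ∈ S.erase (bLA k) then (1:ℝ) else 0)
        ≤ if (bA k ∈ S ∨ bB k ∈ S) then 1 else 0 := by
      split
      · rw [if_pos (Or.inr (Finset.mem_of_mem_erase (by assumption)))]
      · split <;> norm_num
    refine le_max_of_le_right ?_
    rw [hdecomp]
    calc V k (bLA k) (a (bLA k)) + ∑ i ∈ S.erase (bLA k), V k i (a i)
        ≤ ((k:ℝ) - 2) + (if bB k ∈ S.erase (bLA k) then 1 else 0) := by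
          rw [← hsum3] at *; linarith
      _ ≤ _ := by linarith
  · by_cases hLB : bLB k ∈ S ∧ bund k (k-2) ⊆ a (bLB k)
    · -- loser B takes its bundle: only bidder bA can additionally earn
      obtain ⟨hmem, hsub⟩ := hLB
      have hdecomp : ∑ i ∈ S, V k i (a i)
          = V k (bLB k) (a (bLB k)) + ∑ i ∈ S.erase (bLB k), V k i (a i) :=
        (Finset.add_sum_erase S _ hmem).symm
      have hterm : ∀ i ∈ S.erase (bLB k), V k i (a i) ≤ (if i = bA k then 1 else 0) := by
        intro i hi
        obtain ⟨hne, hiS⟩ := Finset.mem_erase.mp hi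
        by_cases hA : i = bA k
        · rw [if_pos hA]
          exact V_real_le_one i (by simp [hA, bA]; omega) _
        · rw [if_neg hA]
          have hdisj : Disjoint (a i) (a (bLB k)) := ha i hiS (bLB k) hmem hne
          by_cases hir : (i : ℕ) < k
          · have hitem : (⟨(i:ℕ), hir⟩ : Fin k) ∈ a (bLB k) := by
              apply hsub
              simp only [bund, Finset.mem_filter, Finset.mem_univ, true_and]
              intro hc
              exact hA (by apply Fin.ext; simp [bA]; omega)
            have hnot : (⟨(i:ℕ), hir⟩ : Fin k) ∉ a i :=
              fun hin => (Finset.disjoint_left.mp hdisj hin) hitem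
            unfold V
            rw [dif_pos hir, if_neg hnot]
          · -- i is a loser, i ≠ bLB so i = bLA; its value must be 0 since hLA failed
            have hiv : (i : ℕ) = k := by
              have := i.isLt
              have hne' : (i : ℕ) ≠ k + 1 := fun hc => hne (by apply Fin.ext; simp [bLB]; omega)
              omega
            have hieq : i = bLA k := by apply Fin.ext; simp [bLA, hiv]
            have : ¬ bund k (k-1) ⊆ a i := by
              intro hsub'
              exact hLA ⟨hieq ▸ hiS, by rw [← hieq]; exact hsub'⟩
            unfold V
            rw [dif_neg (by omega), if_pos (by omega), if_neg this]
      have hsum2 : ∑ i ∈ S.erase (bLB k), V k i (a i)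
          ≤ ∑ i ∈ S.erase (bLB k), (if i = bA k then (1:ℝ) else 0) :=
        Finset.sum_le_sum hterm
      have hsum3 : ∑ i ∈ S.erase (bLB k), (if i = bA k then (1:ℝ) else 0)
          = if bA k ∈ S.erase (bLB k) then 1 else 0 := Finset.sum_ite_eq' _ _ _
      have hVle : V k (bLB k) (a (bLB k)) ≤ (k:ℝ) - 2 :=
        V_loser_le hk _ (by simp [bLB]) _
      have hle1 : (if bA k ∈ S.erase (bLB k) then (1:ℝ) else 0)
          ≤ if (bA k ∈ S ∨ bB k ∈ S) then 1 else 0 := by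
        split
        · rw [if_pos (Or.inl (Finset.mem_of_mem_erase (by assumption)))]
        · split <;> norm_num
      refine le_max_of_le_right ?_
      rw [hdecomp]
      calc V k (bLB k) (a (bLB k)) + ∑ i ∈ S.erase (bLB k), V k i (a i)
          ≤ ((k:ℝ) - 2) + (if bA k ∈ S.erase (bLB k) then 1 else 0) := by
            rw [← hsum3] at *; linarith
        _ ≤ _ := by linarith
    · -- no loser earns anything
      refine le_max_of_le_left ?_
      have hterm : ∀ i ∈ S, V k i (a i) ≤ (if (i : ℕ) < k then (1:ℝ) else 0) := by
        intro i hiS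
        by_cases hir : (i : ℕ) < k
        · rw [if_pos hir]; exact V_real_le_one i hir _
        · rw [if_neg hir]
          have := i.isLt
          by_cases hiv : (i : ℕ) = k
          · have hieq : i = bLA k := by apply Fin.ext; simp [bLA, hiv]
            have : ¬ bund k (k-1) ⊆ a i := by
              intro hsub'
              exact hLA ⟨hieq ▸ hiS, by rw [← hieq]; exact hsub'⟩
            unfold V
            rw [dif_neg hir, if_pos hiv, if_neg this]
          · have hieq : i = bLB k := by apply Fin.ext; simp [bLB]; omega
            have : ¬ bund k (k-2) ⊆ a i := by
              intro hsub'
              exact hLB ⟨hieq ▸ hiS, by rw [← hieq]; exact hsub'⟩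
            unfold V
            rw [dif_neg hir, if_neg hiv, if_neg this]
      calc ∑ i ∈ S, V k i (a i) ≤ ∑ i ∈ S, (if ((i : Fin (k+2)) : ℕ) < k then (1:ℝ) else 0) :=
            Finset.sum_le_sum hterm
        _ = ((S.filter (fun i : Fin (k+2) => (i : ℕ) < k)).card : ℝ) := by
            rw [Finset.sum_ite, Finset.sum_const, Finset.sum_const]
            simp
        _ ≤ _ := le_refl _

lemma alloc_empty (S : Finset (Fin (k+2))) :
    IsAlloc S (fun _ => (∅ : Finset (Fin k))) := fun _ _ _ _ _ => by simp

/-- cardinality of real bidders in `S` is at most `k` -/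
lemma card_real_le (S : Finset (Fin (k+2))) :
    ((S.filter (fun i : Fin (k+2) => (i : ℕ) < k)).card : ℝ) ≤ (k:ℝ) := by
  have h1 : (S.filter (fun i : Fin (k+2) => (i : ℕ) < k)).card
      ≤ (Finset.univ.filter (fun i : Fin (k+2) => (i : ℕ) < k)).card :=
    Finset.card_le_card (Finset.filter_subset_filter _ (Finset.subset_univ S))
  rw [card_lt k k (by omega)] at h1
  exact_mod_cast h1


lemma bddAbove_img (hk : 3 ≤ k) (S : Finset (Fin (k+2))) :
    BddAbove (Set.image (fun a : Fin (k+2) → Finset (Fin k) => ∑ i ∈ S, V k i (a i))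
      {a | IsAlloc S a}) := by
  have hk3 : (3:ℝ) ≤ (k:ℝ) := by exact_mod_cast hk
  rw [bddAbove_def]
  refine ⟨(k:ℝ), ?_⟩
  rintro x ⟨a, ha, rfl⟩
  refine le_trans (sum_bound hk S a ha) (max_le (card_real_le S) ?_)
  split <;> linarith

lemma coalW_le_bound (hk : 3 ≤ k) (S : Finset (Fin (k+2))) :
    coalW (V k) S ≤
      max ((S.filter (fun i : Fin (k+2) => (i : ℕ) < k)).card : ℝ)
        ((k:ℝ) - 2 + (if (bA k ∈ S ∨ bB k ∈ S) then 1 else 0)) := by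
  refine csSup_le ?_ ?_
  · exact ⟨_, ⟨fun _ => ∅, alloc_empty S, rfl⟩⟩
  · rintro x ⟨a, ha, rfl⟩
    exact sum_bound hk S a ha

lemma le_coalW (hk : 3 ≤ k) (S : Finset (Fin (k+2))) (a : Fin (k+2) → Finset (Fin k))
    (ha : IsAlloc S a) : ∑ i ∈ S, V k i (a i) ≤ coalW (V k) S :=
  le_csSup (bddAbove_img hk S) ⟨a, ha, rfl⟩

/-- if a real bidder is missing, real cardinality is at most `k-1` -/
lemma card_real_le_sub (hk : 3 ≤ k) (S : Finset (Fin (k+2))) (j : Fin (k+2))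
    (hj : (j : ℕ) < k) (hjS : j ∉ S) :
    ((S.filter (fun i : Fin (k+2) => (i : ℕ) < k)).card : ℝ) ≤ (k:ℝ) - 1 := by
  have hsub : S.filter (fun i : Fin (k+2) => (i : ℕ) < k)
      ⊆ (Finset.univ.filter (fun i : Fin (k+2) => (i : ℕ) < k)).erase j := by
    intro x hx
    simp only [Finset.mem_filter, Finset.mem_univ, true_and, Finset.mem_erase] at hx ⊢
    exact ⟨fun hc => hjS (hc ▸ hx.1), hx.2⟩
  have h1 := Finset.card_le_card hsub
  rw [Finset.card_erase_of_mem (by simp [hj]), card_lt k k (by omega)] at h1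
  have : (S.filter (fun i : Fin (k+2) => (i : ℕ) < k)).card ≤ k - 1 := h1
  have hcast : ((k - 1 : ℕ) : ℝ) = (k:ℝ) - 1 := by
    have : (1:ℕ) ≤ k := by omega
    push_cast [this]; ring
  calc ((S.filter (fun i : Fin (k+2) => (i : ℕ) < k)).card : ℝ) ≤ ((k-1 : ℕ) : ℝ) := by
        exact_mod_cast this
    _ = (k:ℝ) - 1 := hcast

/-- if both `bA` and `bB` are missing, real cardinality is at most `k-2` -/
lemma card_real_le_sub2 (hk : 3 ≤ k) (S : Finset (Fin (k+2)))
    (hA : bA k ∉ S) (hB : bB k ∉ S) :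
    ((S.filter (fun i : Fin (k+2) => (i : ℕ) < k)).card : ℝ) ≤ (k:ℝ) - 2 := by
  have hsub : S.filter (fun i : Fin (k+2) => (i : ℕ) < k)
      ⊆ ((Finset.univ.filter (fun i : Fin (k+2) => (i : ℕ) < k)).erase (bA k)).erase (bB k) := by
    intro x hx
    simp only [Finset.mem_filter, Finset.mem_univ, true_and, Finset.mem_erase] at hx ⊢
    exact ⟨fun hc => hB (hc ▸ hx.1), fun hc => hA (hc ▸ hx.1), hx.2⟩
  have h1 := Finset.card_le_card hsub
  have hAm : bA k ∈ Finset.univ.filter (fun i : Fin (k+2) => (i : ℕ) < k) := by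
    simp only [Finset.mem_filter, Finset.mem_univ, true_and, bA]
    omega
  have hBm : bB k ∈ (Finset.univ.filter (fun i : Fin (k+2) => (i : ℕ) < k)).erase (bA k) := by
    rw [Finset.mem_erase]
    constructor
    · simp only [bA, bB, Ne, Fin.ext_iff]
      omega
    · simp only [Finset.mem_filter, Finset.mem_univ, true_and, bB]
      omega
  rw [Finset.card_erase_of_mem hBm, Finset.card_erase_of_mem hAm, card_lt k k (by omega)] at h1
  have hcast : ((k - 1 - 1 : ℕ) : ℝ) = (k:ℝ) - 2 := by
    rw [Nat.cast_sub (by omega), Nat.cast_sub (by omega)]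
    push_cast
    ring
  calc ((S.filter (fun i : Fin (k+2) => (i : ℕ) < k)).card : ℝ) ≤ ((k - 1 - 1 : ℕ) : ℝ) := by
        exact_mod_cast h1
    _ = (k:ℝ) - 2 := hcast

/-- standard allocation: each real bidder gets its own item -/
def aStd (k : ℕ) : Fin (k+2) → Finset (Fin k) :=
  fun i => if hi : (i : ℕ) < k then {(⟨(i : ℕ), hi⟩ : Fin k)} else ∅

lemma aStd_alloc (S : Finset (Fin (k+2))) : IsAlloc S (aStd k) := by
  intro i _ j _ hij
  unfold aStd
  split
  · split
    · rw [Finset.disjoint_singleton]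
      simp only [Ne, Fin.ext_iff]
      exact fun hc => hij (Fin.ext hc)
    · simp
  · simp

lemma w_ge_real (hk : 3 ≤ k) (S : Finset (Fin (k+2)))
    (hS : ∀ i : Fin (k+2), (i : ℕ) < k → i ∈ S) : (k:ℝ) ≤ coalW (V k) S := by
  refine le_trans (le_of_eq ?_) (le_coalW hk S (aStd k) (aStd_alloc S))
  have hpt : ∀ i : Fin (k+2), V k i (aStd k i)
      = (if ((i : Fin (k+2)) : ℕ) < k then (1:ℝ) else 0) := by
    intro i
    by_cases hi : (i : ℕ) < k
    · rw [if_pos hi]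
      unfold V aStd
      rw [dif_pos hi, dif_pos hi, if_pos (Finset.mem_singleton_self _)]
    · rw [if_neg hi]
      have : aStd k i = ∅ := by unfold aStd; rw [dif_neg hi]
      rw [this, V_empty hk]
  calc (k:ℝ) = ((S.filter (fun i : Fin (k+2) => (i : ℕ) < k)).card : ℝ) := by
        have : S.filter (fun i : Fin (k+2) => (i : ℕ) < k)
            = Finset.univ.filter (fun i : Fin (k+2) => (i : ℕ) < k) := by
          apply Finset.Subset.antisymm
          · exact Finset.filter_subset_filter _ (Finset.subset_univ S)
          · intro x hx
            simp only [Finset.mem_filter, Finset.mem_univ, true_and] at hx ⊢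
            exact ⟨hS x hx, hx⟩
        rw [this, card_lt k k (by omega)]
    _ = ∑ i ∈ S, (if ((i : Fin (k+2)) : ℕ) < k then (1:ℝ) else 0) := by
        rw [Finset.sum_ite, Finset.sum_const, Finset.sum_const]
        simp
    _ = ∑ i ∈ S, V k i (aStd k i) := by
        apply Finset.sum_congr rfl
        intro i _
        rw [hpt i]

/-- allocation showing `w(S) ≥ k-1` when `S` contains `bB` and `bLA`:
loser A takes everything but item `k-1`, bidder `bB` takes item `k-1`. -/
def aPathA (k : ℕ) : Fin (k+2) → Finset (Fin k) :=
  fun i => if (i : ℕ) = k - 1 then Finset.univ.filter (fun j : Fin k => (j : ℕ) = k - 1)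
    else if (i : ℕ) = k then bund k (k-1) else ∅

lemma aPathA_alloc (hk : 3 ≤ k) (S : Finset (Fin (k+2))) : IsAlloc S (aPathA k) := by
  intro i _ j _ hij
  unfold aPathA
  have hvne : (i : ℕ) ≠ (j : ℕ) := fun hc => hij (Fin.ext hc)
  split
  · split
    · omega
    · split
      · rw [Finset.disjoint_left]
        intro x hx
        simp only [bund, Finset.mem_filter, Finset.mem_univ, true_and] at hx ⊢
        omega
      · simp
  · split
    · split
      · rw [Finset.disjoint_left]
        intro x hx
        simp only [bund, Finset.mem_filter, Finset.mem_univ, true_and] at hx ⊢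
        omega
      · split
        · omega
        · simp
    · simp

lemma w_ge_pathA (hk : 3 ≤ k) (S : Finset (Fin (k+2)))
    (hB : bB k ∈ S) (hLA : bLA k ∈ S) : (k:ℝ) - 1 ≤ coalW (V k) S := by
  refine le_trans ?_ (le_coalW hk S (aPathA k) (aPathA_alloc hk S))
  have hpt : ∀ i : Fin (k+2), V k i (aPathA k i)
      = (if i = bB k then (1:ℝ) else 0) + (if i = bLA k then (k:ℝ) - 2 else 0) := by
    intro i
    by_cases h1 : i = bB k
    · rw [if_pos h1, if_neg (by rw [h1]; simp [bB, bLA, Fin.ext_iff]; omega)]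
      have hv : (i : ℕ) = k - 1 := by rw [h1]; simp [bB]
      have hik : (i : ℕ) < k := by omega
      have hmem : (⟨(i : ℕ), hik⟩ : Fin k) ∈ Finset.univ.filter (fun j : Fin k => (j : ℕ) = k - 1) := by
        simp only [Finset.mem_filter, Finset.mem_univ, true_and]
        exact hv
      unfold V aPathA
      rw [dif_pos hik, if_pos hv, if_pos hmem]
      norm_num
    · rw [if_neg h1]
      by_cases h2 : i = bLA k
      · rw [if_pos h2, h2]
        have hval : (bLA k : ℕ) = k := rfl
        have ha : aPathA k (bLA k) = bund k (k-1) := by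
          unfold aPathA
          rw [if_neg (show ¬((bLA k : ℕ) = k - 1) by omega), if_pos hval]
        rw [ha]
        have hV : V k (bLA k) (bund k (k-1)) = (k:ℝ) - 2 := by
          unfold V
          rw [dif_neg (show ¬((bLA k : ℕ) < k) by omega), if_pos hval,
            if_pos (Finset.Subset.refl _)]
        rw [hV]
        ring
      · rw [if_neg h2]
        have hv1 : (i : ℕ) ≠ k - 1 := by
          intro hc; exact h1 (by apply Fin.ext; simp [bB]; omega)
        have hv2 : (i : ℕ) ≠ k := by
          intro hc; exact h2 (by apply Fin.ext; simp [bLA]; omega)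
        have : aPathA k i = ∅ := by unfold aPathA; rw [if_neg hv1, if_neg hv2]
        rw [this, V_empty hk]
        norm_num
  have hsum : ∑ i ∈ S, V k i (aPathA k i)
      = (if bB k ∈ S then (1:ℝ) else 0) + (if bLA k ∈ S then (k:ℝ) - 2 else 0) := by
    rw [Finset.sum_congr rfl (fun i _ => hpt i), Finset.sum_add_distrib,
      Finset.sum_ite_eq' S (bB k) (fun _ => (1:ℝ)),
      Finset.sum_ite_eq' S (bLA k) (fun _ => (k:ℝ) - 2)]
  rw [hsum, if_pos hB, if_pos hLA]
  linarith

/-- allocation showing `w(S) ≥ k-1` when `S` contains `bA` and `bLB`. -/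
def aPathB (k : ℕ) : Fin (k+2) → Finset (Fin k) :=
  fun i => if (i : ℕ) = k - 2 then Finset.univ.filter (fun j : Fin k => (j : ℕ) = k - 2)
    else if (i : ℕ) = k + 1 then bund k (k-2) else ∅

lemma aPathB_alloc (hk : 3 ≤ k) (S : Finset (Fin (k+2))) : IsAlloc S (aPathB k) := by
  intro i _ j _ hij
  unfold aPathB
  have hvne : (i : ℕ) ≠ (j : ℕ) := fun hc => hij (Fin.ext hc)
  split
  · split
    · omega
    · split
      · rw [Finset.disjoint_left]
        intro x hx
        simp only [bund, Finset.mem_filter, Finset.mem_univ, true_and] at hx ⊢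
        omega
      · simp
  · split
    · split
      · rw [Finset.disjoint_left]
        intro x hx
        simp only [bund, Finset.mem_filter, Finset.mem_univ, true_and] at hx ⊢
        omega
      · split
        · omega
        · simp
    · simp

lemma w_ge_pathB (hk : 3 ≤ k) (S : Finset (Fin (k+2)))
    (hA : bA k ∈ S) (hLB : bLB k ∈ S) : (k:ℝ) - 1 ≤ coalW (V k) S := by
  refine le_trans ?_ (le_coalW hk S (aPathB k) (aPathB_alloc hk S))
  have hpt : ∀ i : Fin (k+2), V k i (aPathB k i)
      = (if i = bA k then (1:ℝ) else 0) + (if i = bLB k then (k:ℝ) - 2 else 0) := by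
    intro i
    by_cases h1 : i = bA k
    · rw [if_pos h1, if_neg (by rw [h1]; simp [bA, bLB, Fin.ext_iff]; omega)]
      have hv : (i : ℕ) = k - 2 := by rw [h1]; simp [bA]
      have hik : (i : ℕ) < k := by omega
      have hmem : (⟨(i : ℕ), hik⟩ : Fin k) ∈ Finset.univ.filter (fun j : Fin k => (j : ℕ) = k - 2) := by
        simp only [Finset.mem_filter, Finset.mem_univ, true_and]
        exact hv
      unfold V aPathB
      rw [dif_pos hik, if_pos hv, if_pos hmem]
      norm_num
    · rw [if_neg h1]
      by_cases h2 : i = bLB k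
      · rw [if_pos h2, h2]
        have hval : (bLB k : ℕ) = k + 1 := rfl
        have ha : aPathB k (bLB k) = bund k (k-2) := by
          unfold aPathB
          rw [if_neg (show ¬((bLB k : ℕ) = k - 2) by omega), if_pos hval]
        rw [ha]
        have hV : V k (bLB k) (bund k (k-2)) = (k:ℝ) - 2 := by
          unfold V
          rw [dif_neg (show ¬((bLB k : ℕ) < k) by omega),
            if_neg (show ¬((bLB k : ℕ) = k) by omega), if_pos (Finset.Subset.refl _)]
        rw [hV]
        ring
      · rw [if_neg h2]
        have hv1 : (i : ℕ) ≠ k - 2 := by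
          intro hc; exact h1 (by apply Fin.ext; simp [bA]; omega)
        have hv2 : (i : ℕ) ≠ k + 1 := by
          intro hc; exact h2 (by apply Fin.ext; simp [bLB]; omega)
        have : aPathB k i = ∅ := by unfold aPathB; rw [if_neg hv1, if_neg hv2]
        rw [this, V_empty hk]
        norm_num
  have hsum : ∑ i ∈ S, V k i (aPathB k i)
      = (if bA k ∈ S then (1:ℝ) else 0) + (if bLB k ∈ S then (k:ℝ) - 2 else 0) := by
    rw [Finset.sum_congr rfl (fun i _ => hpt i), Finset.sum_add_distrib,
      Finset.sum_ite_eq' S (bA k) (fun _ => (1:ℝ)),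
      Finset.sum_ite_eq' S (bLB k) (fun _ => (k:ℝ) - 2)]
  rw [hsum, if_pos hA, if_pos hLB]
  linarith

lemma w_le_k (hk : 3 ≤ k) (S : Finset (Fin (k+2))) : coalW (V k) S ≤ (k:ℝ) := by
  have hk3 : (3:ℝ) ≤ (k:ℝ) := by exact_mod_cast hk
  refine le_trans (coalW_le_bound hk S) (max_le (card_real_le S) ?_)
  split <;> linarith

lemma w_univ (hk : 3 ≤ k) : coalW (V k) Finset.univ = (k:ℝ) :=
  le_antisymm (w_le_k hk _) (w_ge_real hk _ (fun i _ => Finset.mem_univ i))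

lemma w_le_km1 (hk : 3 ≤ k) (S : Finset (Fin (k+2))) (j : Fin (k+2))
    (hj : (j : ℕ) < k) (hjS : j ∉ S) : coalW (V k) S ≤ (k:ℝ) - 1 := by
  refine le_trans (coalW_le_bound hk S) (max_le (card_real_le_sub hk S j hj hjS) ?_)
  split <;> linarith

lemma w_le_km2 (hk : 3 ≤ k) (S : Finset (Fin (k+2)))
    (hA : bA k ∉ S) (hB : bB k ∉ S) : coalW (V k) S ≤ (k:ℝ) - 2 := by
  refine le_trans (coalW_le_bound hk S) (max_le (card_real_le_sub2 hk S hA hB) ?_)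
  rw [if_neg (by tauto)]
  linarith

/-- the candidate core points -/
noncomputable def pivec (k : ℕ) (d p : ℝ) : Fin (k+2) → ℝ :=
  fun i => if (i : ℕ) < k - 2 then d else if (i : ℕ) < k then p else 0

lemma pivec_sum (hk : 3 ≤ k) (d p : ℝ) (T : Finset (Fin (k+2))) :
    ∑ i ∈ T, pivec k d p i
      = d * ((T.filter (fun i : Fin (k+2) => (i : ℕ) < k - 2)).card : ℝ)
        + p * ((if bA k ∈ T then 1 else 0) + (if bB k ∈ T then 1 else 0)) := by
  have vA : (bA k : ℕ) = k - 2 := rfl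
  have vB : (bB k : ℕ) = k - 1 := rfl
  have hpt : ∀ i : Fin (k+2), pivec k d p i
      = d * (if ((i : Fin (k+2)) : ℕ) < k - 2 then (1:ℝ) else 0)
        + p * ((if i = bA k then (1:ℝ) else 0) + (if i = bB k then (1:ℝ) else 0)) := by
    intro i
    unfold pivec
    by_cases h1 : (i : ℕ) < k - 2
    · have h2 : ¬ i = bA k := fun hc => by rw [hc] at h1; omega
      have h3 : ¬ i = bB k := fun hc => by rw [hc] at h1; omega
      rw [if_pos h1, if_pos h1, if_neg h2, if_neg h3]
      ring
    · by_cases h4 : (i : ℕ) < k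
      · rw [if_neg h1, if_pos h4, if_neg h1]
        by_cases h5 : (i : ℕ) = k - 2
        · have h6 : i = bA k := Fin.ext (by rw [vA]; exact h5)
          have h7 : ¬ i = bB k := fun hc => by rw [hc] at h5; omega
          rw [if_pos h6, if_neg h7]
          ring
        · have h6 : i = bB k := Fin.ext (by rw [vB]; omega)
          have h7 : ¬ i = bA k := fun hc => by
            rw [hc] at h6
            have := congrArg Fin.val h6
            rw [vA, vB] at this
            omega
          rw [if_pos h6, if_neg h7]
          ring
      · have h2 : ¬ i = bA k := fun hc => by rw [hc] at h4; omega
        have h3 : ¬ i = bB k := fun hc => by rw [hc] at h4; omega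
        rw [if_neg h1, if_neg h4, if_neg h1, if_neg h2, if_neg h3]
        ring
  rw [Finset.sum_congr rfl (fun i _ => hpt i), Finset.sum_add_distrib, ← Finset.mul_sum,
    ← Finset.mul_sum, Finset.sum_add_distrib,
    Finset.sum_ite_eq' T (bA k) (fun _ => (1:ℝ)),
    Finset.sum_ite_eq' T (bB k) (fun _ => (1:ℝ)), Finset.sum_boole]

lemma pivec_core (hk : 3 ≤ k) (d p : ℝ) (hd : 0 ≤ d) (hp : 0 ≤ p) (hp1 : p ≤ 1)
    (hsum : d * ((k:ℝ) - 2) + p ≤ 1) : pivec k d p ∈ CorePoly (coalW (V k)) := by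
  have hk3 : (3:ℝ) ≤ (k:ℝ) := by exact_mod_cast hk
  constructor
  · intro i
    unfold pivec
    split
    · exact hd
    · split
      · exact hp
      · exact le_refl 0
  · intro S
    rw [w_univ hk, pivec_sum hk d p (Finset.univ \ S)]
    have hmA : bA k ∈ Finset.univ \ S ↔ bA k ∉ S := by simp [Finset.mem_sdiff]
    have hmB : bB k ∈ Finset.univ \ S ↔ bB k ∉ S := by simp [Finset.mem_sdiff]
    have hcJ : (((Finset.univ \ S).filter
        (fun i : Fin (k+2) => (i : ℕ) < k - 2)).card : ℝ) ≤ (k:ℝ) - 2 := by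
      have h1 : ((Finset.univ \ S).filter (fun i : Fin (k+2) => (i : ℕ) < k - 2)).card
          ≤ (Finset.univ.filter (fun i : Fin (k+2) => (i : ℕ) < k - 2)).card :=
        Finset.card_le_card (Finset.filter_subset_filter _ (Finset.subset_univ _))
      rw [card_lt k (k-2) (by omega)] at h1
      have hcast : ((k - 2 : ℕ) : ℝ) = (k:ℝ) - 2 := by
        rw [Nat.cast_sub (by omega)]
        push_cast
        ring
      calc (((Finset.univ \ S).filter
            (fun i : Fin (k+2) => (i : ℕ) < k - 2)).card : ℝ) ≤ ((k - 2 : ℕ) : ℝ) := by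
            exact_mod_cast h1
        _ = (k:ℝ) - 2 := hcast
    have hcJ0 : (0:ℝ) ≤ (((Finset.univ \ S).filter
        (fun i : Fin (k+2) => (i : ℕ) < k - 2)).card : ℝ) := by positivity
    have hdcJ : d * (((Finset.univ \ S).filter
        (fun i : Fin (k+2) => (i : ℕ) < k - 2)).card : ℝ) ≤ d * ((k:ℝ) - 2) :=
      mul_le_mul_of_nonneg_left hcJ hd
    have hdcJ0 : 0 ≤ d * (((Finset.univ \ S).filter
        (fun i : Fin (k+2) => (i : ℕ) < k - 2)).card : ℝ) := mul_nonneg hd hcJ0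
    by_cases hA : bA k ∈ S
    · by_cases hB : bB k ∈ S
      · rw [if_neg (fun hc => (hmA.mp hc) hA), if_neg (fun hc => (hmB.mp hc) hB)]
        by_cases hc0 : ((Finset.univ \ S).filter
            (fun i : Fin (k+2) => (i : ℕ) < k - 2)).card = 0
        · rw [hc0]
          have := w_le_k hk S
          norm_num
          linarith
        · obtain ⟨j, hj⟩ := Finset.card_pos.mp (Nat.pos_of_ne_zero hc0)
          simp only [Finset.mem_filter, Finset.mem_sdiff, Finset.mem_univ, true_and] at hj
          have hw := w_le_km1 hk S j (by omega) hj.1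
          linarith
      · rw [if_neg (fun hc => (hmA.mp hc) hA), if_pos (hmB.mpr hB)]
        have hw := w_le_km1 hk S (bB k) (by simp [bB]; omega) hB
        linarith
    · by_cases hB : bB k ∈ S
      · rw [if_pos (hmA.mpr hA), if_neg (fun hc => (hmB.mp hc) hB)]
        have hw := w_le_km1 hk S (bA k) (by simp [bA]; omega) hA
        linarith
      · rw [if_pos (hmA.mpr hA), if_pos (hmB.mpr hB)]
        have hw := w_le_km2 hk S hA hB
        linarith

lemma winners_eq (hk : 3 ≤ k) :
    winners (V k) = Finset.univ.filter (fun i : Fin (k+2) => (i : ℕ) < k) := by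
  unfold winners
  ext i
  simp only [Finset.mem_filter, Finset.mem_univ, true_and]
  constructor
  · intro hlt
    by_contra hik
    have h1 : (k:ℝ) ≤ coalW (V k) (Finset.univ \ {i}) := by
      apply w_ge_real hk
      intro j hj
      rw [Finset.mem_sdiff, Finset.mem_singleton]
      exact ⟨Finset.mem_univ j, fun hc => hik (hc ▸ hj)⟩
    rw [w_univ hk] at hlt
    linarith
  · intro hik
    have h1 : coalW (V k) (Finset.univ \ {i}) ≤ (k:ℝ) - 1 :=
      w_le_km1 hk _ i hik (by simp)
    rw [w_univ hk]
    linarith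

end MRCAux

open MRCAux in
/-- Unfairness of the MRC rule: there are auctions where some core outcome gives every
winner positive utility, yet every MRC outcome gives k-2 winners zero utility. -/
theorem mrc_unfairness (k : ℕ) (hk : 3 ≤ k) :
    ∃ (n m : ℕ) (v : Fin n → Finset (Fin m) → ℝ),
      (∀ i, v i ∅ = 0) ∧ (∀ i S, 0 ≤ v i S) ∧ (winners v).card = k ∧
      (∃ π ∈ CorePoly (coalW v), ∀ i ∈ winners v, 0 < π i) ∧
      ∀ π ∈ CorePoly (coalW v),
        (∀ π' ∈ CorePoly (coalW v), ∑ i, π' i ≤ ∑ i, π i) →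
        k - 2 ≤ (@Finset.filter _ (fun i => π i = 0) (Classical.decPred _) (winners v)).card := by
  have hk3 : (3:ℝ) ≤ (k:ℝ) := by exact_mod_cast hk
  have hkm2 : (0:ℝ) < (k:ℝ) - 2 := by linarith
  refine ⟨k+2, k, V k, V_empty hk, V_nonneg hk, ?_, ?_, ?_⟩
  · rw [winners_eq hk, card_lt k k (by omega)]
  · -- a strictly positive core point
    set d : ℝ := 1 / (2 * ((k:ℝ) - 2)) with hd
    have hd0 : 0 < d := by positivity
    have hdsum : d * ((k:ℝ) - 2) + (1/2 : ℝ) ≤ 1 := by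
      have h1 : d * ((k:ℝ) - 2) = 1/2 := by
        rw [hd]
        field_simp
      linarith
    refine ⟨pivec k d (1/2),
      pivec_core hk d (1/2) (le_of_lt hd0) (by norm_num) (by norm_num) hdsum, ?_⟩
    intro i hi
    rw [winners_eq hk] at hi
    simp only [Finset.mem_filter, Finset.mem_univ, true_and] at hi
    unfold pivec
    by_cases h1 : (i : ℕ) < k - 2
    · rw [if_pos h1]
      exact hd0
    · rw [if_neg h1, if_pos hi]
      norm_num
  · -- every sum-maximizing core point vanishes on the k-2 small winners
    intro π hπ hmax
    obtain ⟨hnn, hcon⟩ := hπ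
    -- the point (0,…,0,1,1,0,0) is in the core and has total utility 2
    have hstar : pivec k 0 1 ∈ CorePoly (coalW (V k)) :=
      pivec_core hk 0 1 (le_refl 0) (by norm_num) (le_refl 1) (by norm_num)
    have hsumstar : ∑ i, pivec k 0 1 i = 2 := by
      rw [pivec_sum hk 0 1 Finset.univ, if_pos (Finset.mem_univ _),
        if_pos (Finset.mem_univ _)]
      ring
    have htot2 : (2:ℝ) ≤ ∑ i, π i := by
      have := hmax (pivec k 0 1) hstar
      rw [hsumstar] at this
      exact this
    -- losers have zero utility
    have hzero : ∀ x : Fin (k+2), ¬ ((x : ℕ) < k) → π x = 0 := by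
      intro x hx
      have hdiff : Finset.univ \ (Finset.univ.erase x) = {x} := by
        ext j
        simp only [Finset.mem_sdiff, Finset.mem_univ, true_and, Finset.mem_erase,
          Finset.mem_singleton]
        tauto
      have hc := hcon (Finset.univ.erase x)
      rw [hdiff, Finset.sum_singleton, w_univ hk] at hc
      have hw : (k:ℝ) ≤ coalW (V k) (Finset.univ.erase x) := by
        apply w_ge_real hk
        intro j hj
        exact Finset.mem_erase.mpr ⟨fun hc' => hx (hc' ▸ hj), Finset.mem_univ j⟩
      exact le_antisymm (by linarith) (hnn x)
    have hLA0 : π (bLA k) = 0 := hzero (bLA k) (by simp [bLA])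
    have hLB0 : π (bLB k) = 0 := hzero (bLB k) (by simp [bLB])
    -- the two binding coalition constraints
    set Jf := Finset.univ.filter (fun i : Fin (k+2) => (i : ℕ) < k - 2) with hJf
    set TA := Finset.univ.filter (fun i : Fin (k+2) => (i : ℕ) < k - 1) with hTA
    set TB := Finset.univ.filter
      (fun i : Fin (k+2) => (i : ℕ) < k - 2 ∨ (i : ℕ) = k - 1) with hTB
    have hTAc : Finset.univ \ (Finset.univ \ TA) = TA := by
      ext j
      simp only [Finset.mem_sdiff, Finset.mem_univ, true_and]
      tauto
    have hTBc : Finset.univ \ (Finset.univ \ TB) = TB := by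
      ext j
      simp only [Finset.mem_sdiff, Finset.mem_univ, true_and]
      tauto
    have hA1 : ∑ i ∈ TA, π i ≤ 1 := by
      have hwA : (k:ℝ) - 1 ≤ coalW (V k) (Finset.univ \ TA) := by
        apply w_ge_pathA hk
        · rw [Finset.mem_sdiff]
          refine ⟨Finset.mem_univ _, ?_⟩
          rw [hTA]
          simp [bB] <;> omega
        · rw [Finset.mem_sdiff]
          refine ⟨Finset.mem_univ _, ?_⟩
          rw [hTA]
          simp [bLA] <;> omega
      have hc := hcon (Finset.univ \ TA)
      rw [hTAc, w_univ hk] at hc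
      linarith
    have hB1 : ∑ i ∈ TB, π i ≤ 1 := by
      have hwB : (k:ℝ) - 1 ≤ coalW (V k) (Finset.univ \ TB) := by
        apply w_ge_pathB hk
        · rw [Finset.mem_sdiff]
          refine ⟨Finset.mem_univ _, ?_⟩
          rw [hTB]
          simp [bA] <;> omega
        · rw [Finset.mem_sdiff]
          refine ⟨Finset.mem_univ _, ?_⟩
          rw [hTB]
          simp [bLB] <;> omega
      have hc := hcon (Finset.univ \ TB)
      rw [hTBc, w_univ hk] at hc
      linarith
    -- splitting the sums
    have hbAJ : bA k ∉ Jf := by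
      rw [hJf]
      simp [bA] <;> omega
    have hbBJ : bB k ∉ Jf := by
      rw [hJf]
      simp [bB] <;> omega
    have hTAeq : TA = insert (bA k) Jf := by
      rw [hTA, hJf]
      ext j
      simp only [Finset.mem_filter, Finset.mem_univ, true_and, Finset.mem_insert,
        Fin.ext_iff, bA]
      omega
    have hTBeq : TB = insert (bB k) Jf := by
      rw [hTB, hJf]
      ext j
      simp only [Finset.mem_filter, Finset.mem_univ, true_and, Finset.mem_insert,
        Fin.ext_iff, bB]
      omega
    have hsplitA : ∑ i ∈ TA, π i = π (bA k) + ∑ i ∈ Jf, π i := by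
      rw [hTAeq, Finset.sum_insert hbAJ]
    have hsplitB : ∑ i ∈ TB, π i = π (bB k) + ∑ i ∈ Jf, π i := by
      rw [hTBeq, Finset.sum_insert hbBJ]
    have hrest : Finset.univ.filter (fun i : Fin (k+2) => ¬ (i : ℕ) < k - 1)
        = {bB k, bLA k, bLB k} := by
      ext j
      simp only [Finset.mem_filter, Finset.mem_univ, true_and, Finset.mem_insert,
        Finset.mem_singleton, Fin.ext_iff, bB, bLA, bLB]
      have := j.isLt
      omega
    have hne1 : bB k ≠ bLA k := by
      simp only [Ne, Fin.ext_iff, bB, bLA]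
      omega
    have hne2 : bB k ≠ bLB k := by
      simp only [Ne, Fin.ext_iff, bB, bLB]
      omega
    have hne3 : bLA k ≠ bLB k := by
      simp only [Ne, Fin.ext_iff, bLA, bLB]
      omega
    have htot : ∑ i, π i = ∑ i ∈ TA, π i + (π (bB k) + (π (bLA k) + π (bLB k))) := by
      rw [← Finset.sum_filter_add_sum_filter_not Finset.univ
        (fun i : Fin (k+2) => (i : ℕ) < k - 1) π, hrest]
      congr 1
      rw [Finset.sum_insert (by simp [hne1, hne2]), Finset.sum_insert (by simp [hne3]),
        Finset.sum_singleton]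
    have hJ0 : ∑ i ∈ Jf, π i ≤ 0 := by
      have h1 := hsplitA ▸ hA1
      have h2 := hsplitB ▸ hB1
      rw [htot, hsplitA, hLA0, hLB0] at htot2
      linarith
    have hJall : ∀ j ∈ Jf, π j = 0 := by
      have hJnn : (0:ℝ) ≤ ∑ i ∈ Jf, π i := Finset.sum_nonneg fun j _ => hnn j
      have := (Finset.sum_eq_zero_iff_of_nonneg (fun j _ => hnn j)).mp
        (le_antisymm hJ0 hJnn)
      exact this
    -- conclusion
    have hsubset : Jf ⊆ @Finset.filter _ (fun i => π i = 0)
        (Classical.decPred _) (winners (V k)) := by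
      intro j hj
      rw [Finset.mem_filter]
      constructor
      · rw [winners_eq hk]
        simp only [Finset.mem_filter, Finset.mem_univ, true_and]
        rw [hJf] at hj
        simp only [Finset.mem_filter, Finset.mem_univ, true_and] at hj
        omega
      · exact hJall j hj
    calc k - 2 = Jf.card := by rw [hJf, card_lt k (k-2) (by omega)]
      _ ≤ _ := Finset.card_le_card hsubset
end

section
/- Let N be a finite set, w : Finset N → ℝ with w(∅) = 0, let π be an element of the core polytope U(w), and let W_a ⊆ N be nonempty. For a vector π and Δ ∈ ℝ, write π + Δ·1_{W_a} for the vector that adds Δ to π_i for i ∈ W_a and leaves other coordinates unchanged. Then sup{Δ ≥ 0 : π + Δ·1_{W_a} ∈ U(w)} = min over all S ⊆ N with W_a ⊄ S of (w(N) − w(S) − ∑_{i ∈ N∖S} π_i) / |W_a ∖ S|, and this supremum is attained. -/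
/-- The maximum feasible uniform utility increment on an active set equals the minimum
upper bound over the core constraints, and it is attained. -/
theorem max_increment_eq_min_upper_bound (n : ℕ) (w : Finset (Fin n) → ℝ) (h0 : w ∅ = 0)
    (π : Fin n → ℝ) (hπ : π ∈ CorePoly w)
    (Wa : Finset (Fin n)) (hWa : Wa.Nonempty) :
    IsGreatest
      {Δ : ℝ | 0 ≤ Δ ∧ (fun i => π i + if i ∈ Wa then Δ else 0) ∈ CorePoly w}
      (Finset.inf'
        (Finset.filter (fun S : Finset (Fin n) => ¬ Wa ⊆ S) Finset.univ)
        ⟨∅, by simp [Finset.subset_empty, hWa.ne_empty]⟩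
        (fun S => (w Finset.univ - w S - ∑ i ∈ Finset.univ \ S, π i) / ((Wa \ S).card : ℝ))) := by
  obtain ⟨hπ0, hπc⟩ := hπ
  have hcard : ∀ S : Finset (Fin n), ¬ Wa ⊆ S → (0:ℝ) < ((Wa \ S).card : ℝ) := by
    intro S hS
    exact_mod_cast Finset.card_pos.mpr (Finset.sdiff_nonempty.mpr hS)
  have hsum : ∀ (Δ : ℝ) (S : Finset (Fin n)),
      ∑ i ∈ Finset.univ \ S, (π i + if i ∈ Wa then Δ else 0)
        = (∑ i ∈ Finset.univ \ S, π i) + ((Wa \ S).card : ℝ) * Δ := by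
    intro Δ S
    rw [Finset.sum_add_distrib, Finset.sum_ite_mem]
    have h1 : (Finset.univ \ S) ∩ Wa = Wa \ S := by
      ext i; simp [Finset.mem_sdiff, and_comm]
    rw [h1, Finset.sum_const, nsmul_eq_mul]
  constructor
  · constructor
    · apply Finset.le_inf'
      intro S hS
      simp only [Finset.mem_filter] at hS
      have := hπc S
      exact div_nonneg (by linarith) (le_of_lt (hcard S hS.2))
    · refine ⟨fun i => add_nonneg (hπ0 i) ?_, fun S => ?_⟩
      · split
        · apply Finset.le_inf'
          intro S hS
          simp only [Finset.mem_filter] at hS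
          have := hπc S
          exact div_nonneg (by linarith) (le_of_lt (hcard S hS.2))
        · exact le_refl 0
      · rw [hsum]
        by_cases hWS : Wa ⊆ S
        · have : Wa \ S = ∅ := Finset.sdiff_eq_empty_iff_subset.mpr hWS
          rw [this]
          simpa using hπc S
        · have hmem : S ∈ Finset.filter (fun S : Finset (Fin n) => ¬ Wa ⊆ S) Finset.univ :=
            Finset.mem_filter.mpr ⟨Finset.mem_univ S, hWS⟩
          have hle := Finset.inf'_le
            (f := fun S => (w Finset.univ - w S - ∑ i ∈ Finset.univ \ S, π i) / ((Wa \ S).card : ℝ))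
            hmem
          rw [le_div_iff₀ (hcard S hWS)] at hle
          nlinarith [hcard S hWS]
  · rintro Δ ⟨hΔ0, -, h2⟩
    apply Finset.le_inf'
    intro S hS
    simp only [Finset.mem_filter] at hS
    have := h2 S
    rw [hsum] at this
    rw [le_div_iff₀ (hcard S hS.2)]
    linarith
end

section
/- Let N be a finite set and w : Finset N → ℝ with w(∅) = 0 and w(S) ≤ w(N) for every S ⊆ N, and let U = U(w) be the core polytope. Define the water-filling sequence by π^1 = 0, A^1 = N, and inductively, while A^t ≠ ∅: Δ^t = max{Δ ≥ 0 : π^t + Δ·1_{A^t} ∈ U}, π^{t+1} = π^t + Δ^t·1_{A^t}, and A^{t+1} = {i ∈ A^t : there exists π' ∈ U with π'_j ≥ π^{t+1}_j for all j ∈ N and π'_i > π^{t+1}_i}. Then A^{t+1} is a strict subset of A^t whenever A^t ≠ ∅, so there is a first index T ≤ |N| + 1 with A^T = ∅, and π^T is the unique leximin-optimal element of U. -/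
lemma sortVec_monotone {n : ℕ} (x : Fin n → ℝ) : Monotone (sortVec x) :=
  Tuple.monotone_sort x

lemma exists_ge_of_card {n : ℕ} (s : Finset (Fin n)) (m : ℕ) (h : m < s.card) :
    ∃ p ∈ s, m ≤ (p : ℕ) := by
  by_contra hc
  push_neg at hc
  have hsub : s.image (fun p : Fin n => (p : ℕ)) ⊆ Finset.range m := by
    intro a ha
    obtain ⟨p, hp, rfl⟩ := Finset.mem_image.1 ha
    exact Finset.mem_range.2 (hc p hp)
  have := Finset.card_le_card hsub
  rw [Finset.card_image_of_injective _ Fin.val_injective, Finset.card_range] at this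
  omega

/-- generic counting lemma for monotone `u` and downward-closed predicate `Q`. -/
lemma mono_count {n : ℕ} (u : Fin n → ℝ) (hu : Monotone u) (Q : ℝ → Prop)
    [DecidablePred Q] (hQ : ∀ a b : ℝ, a ≤ b → Q b → Q a) (m : Fin n) :
    Q (u m) ↔ (m : ℕ) < (Finset.univ.filter (fun p => Q (u p))).card := by
  constructor
  · intro h
    have hsub : Finset.attachFin (Finset.range (m + 1))
        (fun q hq => lt_of_lt_of_le (Finset.mem_range.1 hq) m.2) ⊆
        Finset.univ.filter (fun p => Q (u p)) := by
      intro p hp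
      rw [Finset.mem_attachFin, Finset.mem_range] at hp
      refine Finset.mem_filter.2 ⟨Finset.mem_univ _, hQ _ _ (hu ?_) h⟩
      exact Fin.le_def.2 (Nat.lt_succ_iff.1 hp)
    have := Finset.card_le_card hsub
    rwa [Finset.card_attachFin, Finset.card_range] at this
  · intro h
    obtain ⟨p, hp, hmp⟩ := exists_ge_of_card _ _ h
    have := (Finset.mem_filter.1 hp).2
    exact hQ _ _ (hu (Fin.le_def.2 hmp)) this

lemma count_sortVec {n : ℕ} (x : Fin n → ℝ) (Q : ℝ → Prop) [DecidablePred Q] :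
    (Finset.univ.filter (fun p => Q (sortVec x p))).card
      = (Finset.univ.filter (fun i => Q (x i))).card := by
  apply Finset.card_nbij' (fun p => Tuple.sort x p) (fun i => (Tuple.sort x).symm i)
  · intro p hp
    simp only [Finset.mem_coe, Finset.mem_filter, Finset.mem_univ, true_and] at hp ⊢
    exact hp
  · intro i hi
    simp only [Finset.mem_coe, Finset.mem_filter, Finset.mem_univ, true_and,
      sortVec] at hi ⊢
    exact Finset.mem_filter.2 ⟨Finset.mem_univ _, by simpa using hi⟩
  · intro p _; simp
  · intro i _; simp

lemma sortVec_lt_iff {n : ℕ} (x : Fin n → ℝ) (c : ℝ) (m : Fin n) :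
    sortVec x m < c ↔ (m : ℕ) < (Finset.univ.filter (fun i => x i < c)).card := by
  rw [mono_count (sortVec x) (sortVec_monotone x) (fun r => r < c)
    (fun a b hab hb => lt_of_le_of_lt hab hb) m,
    count_sortVec x (fun r => r < c)]

lemma sortVec_le_iff {n : ℕ} (x : Fin n → ℝ) (c : ℝ) (m : Fin n) :
    sortVec x m ≤ c ↔ (m : ℕ) < (Finset.univ.filter (fun i => x i ≤ c)).card := by
  rw [mono_count (sortVec x) (sortVec_monotone x) (fun r => r ≤ c)
    (fun a b hab hb => le_trans hab hb) m,
    count_sortVec x (fun r => r ≤ c)]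

lemma lexdom_total {n : ℕ} (x y : Fin n → ℝ) (h : sortVec x ≠ sortVec y) :
    LexDom x y ∨ LexDom y x := by
  classical
  have hne : (Finset.univ.filter (fun j => sortVec x j ≠ sortVec y j)).Nonempty := by
    by_contra hc
    rw [Finset.not_nonempty_iff_eq_empty, Finset.filter_eq_empty_iff] at hc
    exact h (funext fun j => not_not.1 (hc (Finset.mem_univ j)))
  set s := Finset.univ.filter (fun j => sortVec x j ≠ sortVec y j)
  have hk := Finset.min'_mem s hne
  set k := s.min' hne
  have hkne : sortVec x k ≠ sortVec y k := (Finset.mem_filter.1 hk).2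
  have hpre : ∀ j, j < k → sortVec x j = sortVec y j := by
    intro j hj
    by_contra hc
    exact absurd (Finset.min'_le s j (Finset.mem_filter.2 ⟨Finset.mem_univ _, hc⟩))
      (not_le.2 hj)
  rcases lt_or_gt_of_ne hkne with hlt | hgt
  · exact Or.inr ⟨k, fun j hj => (hpre j hj).symm, hlt⟩
  · exact Or.inl ⟨k, hpre, hgt⟩

lemma lexdom_asymm {n : ℕ} {x y : Fin n → ℝ} (h1 : LexDom x y) (h2 : LexDom y x) : False := by
  obtain ⟨k1, he1, hl1⟩ := h1
  obtain ⟨k2, he2, hl2⟩ := h2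
  rcases lt_trichotomy k1 k2 with h | h | h
  · exact absurd (he2 k1 h) (ne_of_lt hl1)
  · subst h; exact absurd (hl1.trans hl2) (lt_irrefl _)
  · exact absurd (he1 k2 h) (ne_of_lt hl2)

lemma zero_mem_core {n : ℕ} (w : Finset (Fin n) → ℝ)
    (hle : ∀ S : Finset (Fin n), w S ≤ w Finset.univ) :
    (0 : Fin n → ℝ) ∈ CorePoly w := by
  refine ⟨fun i => le_refl 0, fun S => ?_⟩
  simp only [Pi.zero_apply, Finset.sum_const_zero]
  linarith [hle S]

lemma core_sandwich {n : ℕ} {w : Finset (Fin n) → ℝ} {x y : Fin n → ℝ}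
    (hy : y ∈ CorePoly w) (hx0 : ∀ i, 0 ≤ x i) (hxy : ∀ i, x i ≤ y i) :
    x ∈ CorePoly w :=
  ⟨hx0, fun S => le_trans (Finset.sum_le_sum fun i _ => hxy i) (hy.2 S)⟩

lemma core_avg {n : ℕ} {w : Finset (Fin n) → ℝ} (B : Finset (Fin n)) (hB : B.Nonempty)
    (f : Fin n → Fin n → ℝ) (hf : ∀ i ∈ B, f i ∈ CorePoly w) :
    (fun j => (∑ i ∈ B, f i j) / B.card) ∈ CorePoly w := by
  have hc : (0 : ℝ) < B.card := by exact_mod_cast Finset.card_pos.2 hB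
  constructor
  · intro j
    apply div_nonneg _ (le_of_lt hc)
    exact Finset.sum_nonneg fun i hi => (hf i hi).1 j
  · intro S
    simp only []
    rw [← Finset.sum_div, div_le_iff₀ hc]
    calc ∑ j ∈ Finset.univ \ S, ∑ i ∈ B, f i j
        = ∑ i ∈ B, ∑ j ∈ Finset.univ \ S, f i j := Finset.sum_comm
      _ ≤ ∑ _i ∈ B, (w Finset.univ - w S) :=
          Finset.sum_le_sum fun i hi => (hf i hi).2 S
      _ = (w Finset.univ - w S) * B.card := by
          rw [Finset.sum_const, nsmul_eq_mul, mul_comm]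

/-- Correctness of the water-filling algorithm: the active sets strictly decrease,
the algorithm terminates after at most `|N| + 1` steps, and it returns the unique
leximin-optimal element of the core polytope. -/
theorem water_filling_correct (n : ℕ) (w : Finset (Fin n) → ℝ) (h0 : w ∅ = 0)
    (hle : ∀ S : Finset (Fin n), w S ≤ w Finset.univ)
    (π : ℕ → Fin n → ℝ) (A : ℕ → Finset (Fin n)) (Δ : ℕ → ℝ)
    (hπ1 : π 1 = 0) (hA1 : A 1 = Finset.univ)
    (hstep : ∀ t, 1 ≤ t → (A t).Nonempty →
      IsGreatest {d : ℝ | 0 ≤ d ∧ (fun i => π t i + if i ∈ A t then d else 0) ∈ CorePoly w}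
        (Δ t) ∧
      π (t + 1) = (fun i => π t i + if i ∈ A t then Δ t else 0) ∧
      A (t + 1) =
        @Finset.filter _
          (fun i => ∃ π' ∈ CorePoly w, (∀ j, π (t + 1) j ≤ π' j) ∧ π (t + 1) i < π' i)
          (Classical.decPred _) (A t)) :
    (∀ t, 1 ≤ t → (A t).Nonempty → A (t + 1) ⊂ A t) ∧
    ∃ T, 1 ≤ T ∧ T ≤ n + 1 ∧ A T = ∅ ∧ (∀ t, 1 ≤ t → t < T → (A t).Nonempty) ∧
      (π T ∈ CorePoly w ∧ ∀ π' ∈ CorePoly w, ¬ LexDom π' (π T)) ∧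
      ∀ ρ : Fin n → ℝ,
        (ρ ∈ CorePoly w ∧ ∀ π' ∈ CorePoly w, ¬ LexDom π' ρ) → ρ = π T := by
  classical
  -- Part 1: strict decrease of active sets
  have part1 : ∀ t, 1 ≤ t → (A t).Nonempty → A (t + 1) ⊂ A t := by
    intro t ht hne
    obtain ⟨hgreat, hπs, hAs⟩ := hstep t ht hne
    have hmemU : π (t + 1) ∈ CorePoly w := by rw [hπs]; exact hgreat.1.2
    have hΔ0 : 0 ≤ Δ t := hgreat.1.1
    have hsub : A (t + 1) ⊆ A t := by rw [hAs]; exact Finset.filter_subset _ _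
    refine ⟨hsub, fun hsup => ?_⟩
    have hall : ∀ i ∈ A t, ∃ π' ∈ CorePoly w,
        (∀ j, π (t + 1) j ≤ π' j) ∧ π (t + 1) i < π' i := by
      intro i hi
      have hm := hsup hi
      rw [hAs, Finset.mem_filter] at hm
      exact hm.2
    have hch : ∀ i, ∃ π', i ∈ A t →
        (π' ∈ CorePoly w ∧ (∀ j, π (t + 1) j ≤ π' j) ∧ π (t + 1) i < π' i) := by
      intro i
      by_cases hi : i ∈ A t
      · obtain ⟨π', h1, h2, h3⟩ := hall i hi
        exact ⟨π', fun _ => ⟨h1, h2, h3⟩⟩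
      · exact ⟨0, fun h => absurd h hi⟩
    choose g hg using hch
    set σ : Fin n → ℝ := fun j => (∑ i ∈ A t, g i j) / (A t).card with hσ
    have hσU : σ ∈ CorePoly w := core_avg _ hne _ (fun i hi => (hg i hi).1)
    have hcard : (0 : ℝ) < (A t).card := by exact_mod_cast Finset.card_pos.2 hne
    have hσge : ∀ j, π (t + 1) j ≤ σ j := by
      intro j
      rw [hσ]
      rw [le_div_iff₀ hcard]
      calc π (t + 1) j * (A t).card = ∑ _i ∈ A t, π (t + 1) j := by
            rw [Finset.sum_const, nsmul_eq_mul, mul_comm]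
        _ ≤ ∑ i ∈ A t, g i j := Finset.sum_le_sum fun i hi => (hg i hi).2.1 j
    have hσgt : ∀ i ∈ A t, π (t + 1) i < σ i := by
      intro i hi
      rw [hσ]
      rw [lt_div_iff₀ hcard]
      calc π (t + 1) i * (A t).card = ∑ _i ∈ A t, π (t + 1) i := by
            rw [Finset.sum_const, nsmul_eq_mul, mul_comm]
        _ < ∑ i' ∈ A t, g i' i :=
            Finset.sum_lt_sum (fun i' hi' => (hg i' hi').2.1 i) ⟨i, hi, (hg i hi).2.2⟩
    obtain ⟨i₀, hi₀, hmin⟩ := Finset.exists_min_image (A t) (fun i => σ i - π (t + 1) i) hne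
    set ε := σ i₀ - π (t + 1) i₀ with hε
    have hε0 : 0 < ε := sub_pos.2 (hσgt i₀ hi₀)
    have hd : (Δ t + ε) ∈ {d : ℝ | 0 ≤ d ∧
        (fun i => π t i + if i ∈ A t then d else 0) ∈ CorePoly w} := by
      have hkey : ∀ i, π t i + (if i ∈ A t then Δ t + ε else 0)
          = π (t + 1) i + (if i ∈ A t then ε else 0) := by
        intro i
        rw [hπs]
        by_cases hi : i ∈ A t <;> simp [hi] <;> ring
      refine ⟨by linarith, ?_⟩
      apply core_sandwich hσU
      · intro i
        show 0 ≤ π t i + (if i ∈ A t then Δ t + ε else 0)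
        rw [hkey i]
        have := hmemU.1 i
        split_ifs <;> linarith
      · intro i
        show π t i + (if i ∈ A t then Δ t + ε else 0) ≤ σ i
        rw [hkey i]
        by_cases hi : i ∈ A t
        · have h5 := hmin i hi
          have h6 := hσge i
          rw [if_pos hi]
          linarith
        · rw [if_neg hi, add_zero]
          exact hσge i
    have := hgreat.2 hd
    linarith
  -- Termination
  have hPex : ∃ s, 1 ≤ s ∧ A s = ∅ ∧ s ≤ n + 1 := by
    by_cases hn : ∀ s, 1 ≤ s → s ≤ n + 1 → (A s).Nonempty
    · exfalso
      have hcards : ∀ k, k ≤ n → (A (k + 1)).card ≤ n - k := by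
        intro k
        induction k with
        | zero =>
          intro _
          have := Finset.card_le_univ (A 1)
          simpa using this
        | succ k ih =>
          intro hk
          have h1 : (A (k + 1)).Nonempty := hn _ (by omega) (by omega)
          have hss := part1 (k + 1) (by omega) h1
          have hlt := Finset.card_lt_card hss
          have := ih (by omega)
          omega
      have h1 := hcards n (le_refl n)
      have hne := hn (n + 1) (by omega) (by omega)
      have := Finset.card_pos.2 hne
      omega
    · push_neg at hn
      obtain ⟨s, h1, h2, h3⟩ := hn
      exact ⟨s, h1, h3, h2⟩
  have hPex' : ∃ t, 1 ≤ t ∧ A t = ∅ := by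
    obtain ⟨s, h1, h2, _⟩ := hPex
    exact ⟨s, h1, h2⟩
  set T := Nat.find hPex' with hT
  have hT1 : 1 ≤ T := (Nat.find_spec hPex').1
  have hTempty : A T = ∅ := (Nat.find_spec hPex').2
  have hTle : T ≤ n + 1 := by
    obtain ⟨s, h1, h2, h3⟩ := hPex
    exact le_trans (Nat.find_min' hPex' ⟨h1, h2⟩) h3
  have hTne : ∀ t, 1 ≤ t → t < T → (A t).Nonempty := by
    intro t h1 h2
    have := Nat.find_min hPex' h2
    push_neg at this
    exact this h1
  have hstep' : ∀ t, 1 ≤ t → t < T →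
      IsGreatest {d : ℝ | 0 ≤ d ∧ (fun i => π t i + if i ∈ A t then d else 0) ∈ CorePoly w}
        (Δ t) ∧
      π (t + 1) = (fun i => π t i + if i ∈ A t then Δ t else 0) ∧
      A (t + 1) =
        @Finset.filter _
          (fun i => ∃ π' ∈ CorePoly w, (∀ j, π (t + 1) j ≤ π' j) ∧ π (t + 1) i < π' i)
          (Classical.decPred _) (A t) :=
    fun t h1 h2 => hstep t h1 (hTne t h1 h2)
  -- basic invariants
  have hmemUU : ∀ t, 1 ≤ t → t ≤ T → π t ∈ CorePoly w := by
    intro t h1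
    induction t, h1 using Nat.le_induction with
    | base => intro _; rw [hπ1]; exact zero_mem_core w hle
    | succ t h1 ih =>
      intro h2
      obtain ⟨hgreat, hπs, _⟩ := hstep' t h1 (by omega)
      rw [hπs]; exact hgreat.1.2
  have hAsub : ∀ t, 1 ≤ t → t < T → A (t + 1) ⊆ A t := by
    intro t h1 h2
    obtain ⟨_, _, hAs⟩ := hstep' t h1 h2
    rw [hAs]; exact Finset.filter_subset _ _
  have hAmono : ∀ s t, 1 ≤ s → s ≤ t → t ≤ T → A t ⊆ A s := by
    intro s t h1 h2
    induction t, h2 using Nat.le_induction with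
    | base => intro _; exact subset_rfl
    | succ t h2 ih =>
      intro h3
      exact subset_trans (hAsub t (by omega) (by omega)) (ih (by omega))
  have hΔ0 : ∀ t, 1 ≤ t → t < T → 0 ≤ Δ t := fun t h1 h2 => (hstep' t h1 h2).1.1.1
  have hπmono1 : ∀ t, 1 ≤ t → t < T → ∀ i, π t i ≤ π (t + 1) i := by
    intro t h1 h2 i
    obtain ⟨_, hπs, _⟩ := hstep' t h1 h2
    rw [hπs]
    have := hΔ0 t h1 h2
    simp only
    split_ifs <;> linarith
  have hπmono : ∀ s t, 1 ≤ s → s ≤ t → t ≤ T → ∀ i, π s i ≤ π t i := by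
    intro s t h1 h2
    induction t, h2 using Nat.le_induction with
    | base => intro _ i; exact le_refl _
    | succ t h2 ih =>
      intro h3 i
      exact le_trans (ih (by omega) i) (hπmono1 t (by omega) (by omega) i)
  have hfrozen : ∀ s t, 1 ≤ s → s ≤ t → t ≤ T → ∀ i, i ∉ A s → π t i = π s i := by
    intro s t h1 h2
    induction t, h2 using Nat.le_induction with
    | base => intro _ i _; rfl
    | succ t h2 ih =>
      intro h3 i hi
      have hi' : i ∉ A t := fun h => hi (hAmono s t h1 h2 (by omega) h)
      obtain ⟨_, hπs, _⟩ := hstep' t (by omega) (by omega)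
      rw [hπs]
      show π t i + (if i ∈ A t then Δ t else 0) = π s i
      rw [if_neg hi', add_zero]
      exact ih (by omega) i hi
  have hconst : ∀ t, 1 ≤ t → t ≤ T → ∀ i ∈ A t, ∀ i' ∈ A t, π t i = π t i' := by
    intro t h1
    induction t, h1 using Nat.le_induction with
    | base => intro _ i _ i' _; rw [hπ1]; rfl
    | succ t h1 ih =>
      intro h2 i hi i' hi'
      obtain ⟨_, hπs, _⟩ := hstep' t h1 (by omega)
      have hsub := hAsub t h1 (by omega)
      have hit : i ∈ A t := hsub hi
      have hit' : i' ∈ A t := hsub hi'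
      rw [hπs]
      show π t i + (if i ∈ A t then Δ t else 0) = π t i' + (if i' ∈ A t then Δ t else 0)
      rw [if_pos hit, if_pos hit', ih (by omega) i hit i' hit']
  have horder : ∀ t, 1 ≤ t → t ≤ T → ∀ i, i ∉ A t → ∀ j ∈ A t, π t i ≤ π t j := by
    intro t h1
    induction t, h1 using Nat.le_induction with
    | base => intro _ i hi; exact absurd (hA1 ▸ Finset.mem_univ i) hi
    | succ t h1 ih =>
      intro h2 i hi j hj
      obtain ⟨_, hπs, _⟩ := hstep' t h1 (by omega)
      have hsub := hAsub t h1 (by omega)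
      have hjt : j ∈ A t := hsub hj
      have hΔ := hΔ0 t h1 (by omega)
      rw [hπs]
      show π t i + (if i ∈ A t then Δ t else 0) ≤ π t j + (if j ∈ A t then Δ t else 0)
      rw [if_pos hjt]
      by_cases hit : i ∈ A t
      · rw [if_pos hit, hconst t h1 (by omega) i hit j hjt]
      · rw [if_neg hit, add_zero]
        have := ih (by omega) i hit j hjt
        linarith
  -- value facts about exiting coordinates
  have hval : ∀ t, 1 ≤ t → t < T → ∀ j ∈ A t, j ∉ A (t + 1) →
      (π T j = π (t + 1) j ∧ (∀ i ∈ A t, π T j ≤ π T i) ∧ (∀ i, i ∉ A t → π T i ≤ π T j)) := by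
    intro t h1 h2 j hj hj'
    obtain ⟨_, hπs, _⟩ := hstep' t h1 h2
    have hconst' : ∀ i ∈ A t, π (t + 1) i = π (t + 1) j := by
      intro i hi
      rw [hπs]
      show π t i + (if i ∈ A t then Δ t else 0) = π t j + (if j ∈ A t then Δ t else 0)
      rw [if_pos hi, if_pos hj, hconst t h1 (by omega) i (by exact hi) j hj]
    have hTj : π T j = π (t + 1) j := hfrozen (t + 1) T (by omega) (by omega) (by omega) j hj'
    refine ⟨hTj, ?_, ?_⟩
    · intro i hi
      calc π T j = π (t + 1) j := hTj
        _ = π (t + 1) i := (hconst' i hi).symm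
        _ ≤ π T i := hπmono (t + 1) T (by omega) (by omega) (by omega) i
    · intro i hi
      have h3 : π T i = π t i := hfrozen t T (by omega) (by omega) (by omega) i hi
      have h4 : π t i ≤ π t j := horder t h1 (by omega) i hi j hj
      have h5 : π t j ≤ π (t + 1) j := hπmono1 t h1 h2 j
      rw [h3, hTj]
      linarith
  -- existence of a tight constraint for an exiting coordinate
  have htight : ∀ t, 1 ≤ t → t < T → ∀ j ∈ A t, j ∉ A (t + 1) →
      ∃ S : Finset (Fin n), j ∉ S ∧
        ∑ i ∈ Finset.univ \ S, π (t + 1) i = w Finset.univ - w S := by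
    intro t h1 h2 j hj hj'
    by_contra hcon
    push_neg at hcon
    obtain ⟨hgreat, hπs, hAs⟩ := hstep' t h1 h2
    have hmemU : π (t + 1) ∈ CorePoly w := by rw [hπs]; exact hgreat.1.2
    set s : Finset (Finset (Fin n)) := Finset.univ.filter (fun S => j ∉ S) with hs
    have hsne : s.Nonempty := ⟨∅, by simp [hs]⟩
    obtain ⟨S₀, hS₀, hminS⟩ := Finset.exists_min_image s
      (fun S => w Finset.univ - w S - ∑ i ∈ Finset.univ \ S, π (t + 1) i) hsne
    have hjS₀ : j ∉ S₀ := (Finset.mem_filter.1 hS₀).2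
    set ε := w Finset.univ - w S₀ - ∑ i ∈ Finset.univ \ S₀, π (t + 1) i with hεdef
    have hεne : ε ≠ 0 := fun h => hcon S₀ hjS₀ (by rw [hεdef] at h; linarith)
    have hε0 : 0 < ε := lt_of_le_of_ne (by have := hmemU.2 S₀; rw [hεdef]; linarith) (Ne.symm hεne)
    set π' : Fin n → ℝ := fun i => π (t + 1) i + if i = j then ε else 0 with hπ'
    have hπ'U : π' ∈ CorePoly w := by
      constructor
      · intro i
        have := hmemU.1 i
        show 0 ≤ π (t + 1) i + (if i = j then ε else 0)
        split_ifs <;> linarith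
      · intro S
        have hsplit : ∑ i ∈ Finset.univ \ S, π' i
            = (∑ i ∈ Finset.univ \ S, π (t + 1) i) + (if j ∈ Finset.univ \ S then ε else 0) := by
          rw [show (∑ i ∈ Finset.univ \ S, π' i)
              = ∑ i ∈ Finset.univ \ S, (π (t + 1) i + if i = j then ε else 0) from rfl,
            Finset.sum_add_distrib, Finset.sum_ite_eq' (Finset.univ \ S) j (fun _ => ε)]
        rw [hsplit]
        by_cases hjS : j ∈ Finset.univ \ S
        · rw [if_pos hjS]
          have hjS' : j ∉ S := (Finset.mem_sdiff.1 hjS).2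
          have := hminS S (Finset.mem_filter.2 ⟨Finset.mem_univ _, hjS'⟩)
          rw [hεdef] at this
          linarith
        · rw [if_neg hjS, add_zero]
          exact hmemU.2 S
    have : j ∈ A (t + 1) := by
      rw [hAs, Finset.mem_filter]
      refine ⟨hj, π', hπ'U, fun i => ?_, ?_⟩
      · show π (t + 1) i ≤ π (t + 1) i + (if i = j then ε else 0)
        split_ifs <;> linarith
      · show π (t + 1) j < π (t + 1) j + (if j = j then ε else 0)
        rw [if_pos rfl]
        linarith
    exact hj' this
  -- tight sets avoid the next active set
  have hdisj : ∀ t, 1 ≤ t → t < T → ∀ S : Finset (Fin n),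
      (∑ i ∈ Finset.univ \ S, π (t + 1) i = w Finset.univ - w S) →
      ∀ i ∈ Finset.univ \ S, i ∉ A (t + 1) := by
    intro t h1 h2 S hSsum i hiE hiA
    obtain ⟨_, _, hAs⟩ := hstep' t h1 h2
    rw [hAs, Finset.mem_filter] at hiA
    obtain ⟨π', hπ'U, hdom', hstrict⟩ := hiA.2
    have hlt : ∑ i' ∈ Finset.univ \ S, π (t + 1) i' < ∑ i' ∈ Finset.univ \ S, π' i' :=
      Finset.sum_lt_sum (fun i' _ => hdom' i') ⟨i, hiE, hstrict⟩
    have := hπ'U.2 S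
    linarith
  -- cardinality bound on filters
  have hfiltn : ∀ (p : Fin n → Prop) (hp : DecidablePred p),
      (@Finset.filter _ p hp Finset.univ).card ≤ n := by
    intro p hp
    have := Finset.card_filter_le (Finset.univ : Finset (Fin n)) p
    simpa using this
  -- main step lemma
  have hstepmain : ∀ t, 1 ≤ t → t < T → ∀ ρ, ρ ∈ CorePoly w →
      (∀ j ∈ Finset.univ \ A t, ρ j = π T j) →
      (∀ m : Fin n, (m : ℕ) ≤ (Finset.univ \ A t).card → sortVec (π T) m ≤ sortVec ρ m) →
      ∀ j ∈ Finset.univ \ A (t + 1), ρ j = π T j := by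
    intro t h1 h2 ρ hρU hρF hdom
    have hgeD : ∀ j ∈ A t, j ∉ A (t + 1) → π T j ≤ ρ j := by
      intro j hj hj'
      by_contra hlt
      push_neg at hlt
      obtain ⟨hTj, hU2, hU1⟩ := hval t h1 h2 j hj hj'
      set c := π T j with hc
      set F := Finset.univ \ A t with hF
      set m := (F.filter (fun i => π T i < c)).card with hm
      have hm_le : m ≤ F.card := Finset.card_le_card (Finset.filter_subset _ _)
      have hcount_pT : Finset.univ.filter (fun i => π T i < c)
          = F.filter (fun i => π T i < c) := by
        ext i
        simp only [Finset.mem_filter, Finset.mem_univ, true_and, hF, Finset.mem_sdiff]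
        constructor
        · intro hi
          exact ⟨fun hiA => absurd hi (not_lt.2 (hU2 i hiA)), hi⟩
        · exact fun hi => hi.2
      have hρfilt : F.filter (fun i => ρ i < c) = F.filter (fun i => π T i < c) :=
        Finset.filter_congr (fun i hi => by rw [hρF i hi])
      have hjF : j ∉ F := fun h => (Finset.mem_sdiff.1 h).2 hj
      have hins : insert j (F.filter (fun i => ρ i < c))
          ⊆ Finset.univ.filter (fun i => ρ i < c) := by
        intro i hi
        rcases Finset.mem_insert.1 hi with rfl | hi
        · exact Finset.mem_filter.2 ⟨Finset.mem_univ _, hlt⟩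
        · exact Finset.mem_filter.2 ⟨Finset.mem_univ _, (Finset.mem_filter.1 hi).2⟩
      have hcard_ins : m + 1 ≤ (Finset.univ.filter (fun i => ρ i < c)).card := by
        have h3 : (insert j (F.filter (fun i => ρ i < c))).card = m + 1 := by
          rw [Finset.card_insert_of_notMem (fun h => hjF (Finset.filter_subset _ _ h)),
            hρfilt]
        rw [← h3]
        exact Finset.card_le_card hins
      have hmn : m < n :=
        lt_of_lt_of_le hcard_ins (hfiltn _ _)
      have h3 : sortVec ρ ⟨m, hmn⟩ < c := (sortVec_lt_iff ρ c ⟨m, hmn⟩).2 (by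
        show m < _
        omega)
      have h4 : ¬ sortVec (π T) ⟨m, hmn⟩ < c := by
        rw [sortVec_lt_iff, hcount_pT]
        show ¬ (m < m)
        omega
      push_neg at h4
      have h5 := hdom ⟨m, hmn⟩ (by show m ≤ F.card; omega)
      linarith
    have hge : ∀ i ∈ Finset.univ \ A (t + 1), π T i ≤ ρ i := by
      intro i hi
      rcases Finset.mem_sdiff.1 hi with ⟨_, hiA⟩
      by_cases hiAt : i ∈ A t
      · exact hgeD i hiAt hiA
      · exact le_of_eq (hρF i (Finset.mem_sdiff.2 ⟨Finset.mem_univ _, hiAt⟩)).symm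
    intro j hj
    rcases Finset.mem_sdiff.1 hj with ⟨_, hjA⟩
    by_cases hjAt : j ∈ A t
    · obtain ⟨S, hjS, hSsum⟩ := htight t h1 h2 j hjAt hjA
      have hEsub : ∀ i ∈ Finset.univ \ S, i ∉ A (t + 1) := hdisj t h1 h2 S hSsum
      have hπTE : ∀ i ∈ Finset.univ \ S, π T i = π (t + 1) i := fun i hi =>
        hfrozen (t + 1) T (by omega) (by omega) (by omega) i (hEsub i hi)
      have hsum_le : ∑ i ∈ Finset.univ \ S, ρ i ≤ ∑ i ∈ Finset.univ \ S, π T i := by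
        rw [Finset.sum_congr rfl hπTE, hSsum]
        exact hρU.2 S
      have hpt : ∀ i ∈ Finset.univ \ S, π T i ≤ ρ i := fun i hi =>
        hge i (Finset.mem_sdiff.2 ⟨Finset.mem_univ _, hEsub i hi⟩)
      have heqall := (Finset.sum_eq_sum_iff_of_le hpt).1
        (le_antisymm (Finset.sum_le_sum hpt) hsum_le)
      exact (heqall j (Finset.mem_sdiff.2 ⟨Finset.mem_univ _, hjS⟩)).symm
    · exact hρF j (Finset.mem_sdiff.2 ⟨Finset.mem_univ _, hjAt⟩)
  have hcardF : ∀ t, 1 ≤ t → t < T →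
      (Finset.univ \ A t).card < (Finset.univ \ A (t + 1)).card := by
    intro t h1 h2
    have hss := part1 t h1 (hTne t h1 h2)
    have hlt := Finset.card_lt_card hss
    rw [Finset.card_sdiff_of_subset (Finset.subset_univ _), Finset.card_sdiff_of_subset (Finset.subset_univ _)]
    have h3 := Finset.card_le_univ (A t)
    rw [Finset.card_univ, Fintype.card_fin] at *
    omega
  -- prefix induction
  have hB : ∀ t, 1 ≤ t → t ≤ T → ∀ ρ, ρ ∈ CorePoly w →
      (∀ m : Fin n, (m : ℕ) < (Finset.univ \ A t).card → sortVec (π T) m ≤ sortVec ρ m) →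
      ∀ j ∈ Finset.univ \ A t, ρ j = π T j := by
    intro t h1
    induction t, h1 using Nat.le_induction with
    | base =>
      intro _ ρ _ _ j hj
      rw [hA1] at hj
      simp at hj
    | succ t h1 ih =>
      intro h2 ρ hρU hdom
      have h2' : t < T := by omega
      have hflt := hcardF t h1 h2'
      have hρF := ih (by omega) ρ hρU (fun m hm => hdom m (by omega))
      exact hstepmain t h1 h2' ρ hρU hρF (fun m hm => hdom m (by omega))
  have hmemT : π T ∈ CorePoly w := hmemUU T hT1 (le_refl T)
  have hcardFT : (Finset.univ \ A T).card = n := by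
    rw [hTempty]
    simp
  -- no element of the core leximin-dominates π T
  have hnoDom : ∀ ρ ∈ CorePoly w, ¬ LexDom ρ (π T) := by
    rintro ρ hρU ⟨k, hpre, hk⟩
    set P : ℕ → Prop := fun s => 1 ≤ s ∧ (Finset.univ \ A s).card ≤ (k : ℕ) with hP
    have hP1 : P 1 := ⟨le_refl 1, by rw [hA1]; simp⟩
    set t := Nat.findGreatest P T with ht
    have hPt : P t := Nat.findGreatest_spec hT1 hP1
    have htT : t ≤ T := Nat.findGreatest_le T
    have ht1 : 1 ≤ t := hPt.1
    have htltT : t < T := by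
      by_contra hcon
      push_neg at hcon
      have heq : t = T := le_antisymm htT hcon
      have h3 := hPt.2
      have h4 : (Finset.univ \ A t).card = n := by rw [heq]; exact hcardFT
      have h5 := k.2
      omega
    have htT1 : t + 1 ≤ T := by omega
    have hone : (1:ℕ) ≤ t + 1 := by omega
    have hnext : (k : ℕ) < (Finset.univ \ A (t + 1)).card := by
      have hng : ¬ P (t + 1) := Nat.findGreatest_is_greatest (lt_add_one t) htT1
      exact not_le.1 fun hc => hng ⟨hone, hc⟩
    have hdomt : ∀ m : Fin n, (m : ℕ) ≤ (Finset.univ \ A t).card →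
        sortVec (π T) m ≤ sortVec ρ m := by
      intro m hm
      have hmk : (m : ℕ) ≤ (k : ℕ) := le_trans hm hPt.2
      rcases lt_or_eq_of_le hmk with h | h
      · exact le_of_eq (hpre m (Fin.lt_def.2 h)).symm
      · have hmk' : m = k := Fin.ext h
        rw [hmk']
        exact le_of_lt hk
    have hρF := hB t ht1 (le_of_lt htltT) ρ hρU (fun m hm => hdomt m (le_of_lt hm))
    have hρF' := hstepmain t ht1 htltT ρ hρU hρF hdomt
    -- pick a coordinate exiting at step t
    have hss : ¬ A t ⊆ A (t + 1) := by
      intro hsub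
      have h3 : (Finset.univ \ A (t + 1)).card ≤ (Finset.univ \ A t).card :=
        Finset.card_le_card (fun i hi => Finset.mem_sdiff.2
          ⟨Finset.mem_univ _, fun hmem => (Finset.mem_sdiff.1 hi).2 (hsub hmem)⟩)
      have h4 := hPt.2
      omega
    obtain ⟨j₀, hj₀A, hj₀A'⟩ := Finset.not_subset.1 hss
    obtain ⟨hTj₀, hU2, hU1⟩ := hval t ht1 htltT j₀ hj₀A hj₀A'
    set c := π T j₀ with hc
    -- sortVec ρ k ≤ c
    have hsub1 : Finset.univ \ A (t + 1) ⊆ Finset.univ.filter (fun i => ρ i ≤ c) := by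
      intro i hi
      refine Finset.mem_filter.2 ⟨Finset.mem_univ _, ?_⟩
      rw [hρF' i hi]
      rcases Finset.mem_sdiff.1 hi with ⟨_, hiA⟩
      by_cases hiAt : i ∈ A t
      · -- i exits at step t as well : π T i = c
        obtain ⟨hTi, hU2', hU1'⟩ := hval t ht1 htltT i hiAt hiA
        exact hU2' j₀ hj₀A
      · exact hU1 i hiAt
    have h6 : sortVec ρ k ≤ c := (sortVec_le_iff ρ c k).2
      (lt_of_lt_of_le hnext (Finset.card_le_card hsub1))
    have hsub2 : Finset.univ.filter (fun i => π T i < c) ⊆ Finset.univ \ A t := by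
      intro i hi
      have hi' := (Finset.mem_filter.1 hi).2
      refine Finset.mem_sdiff.2 ⟨Finset.mem_univ _, fun hiA => ?_⟩
      exact absurd hi' (not_lt.2 (hU2 i hiA))
    have h7 : ¬ sortVec (π T) k < c := by
      rw [sortVec_lt_iff]
      intro hcon
      have := Finset.card_le_card hsub2
      have := hPt.2
      omega
    push_neg at h7
    linarith
  -- uniqueness
  have huniq : ∀ ρ : Fin n → ℝ,
      (ρ ∈ CorePoly w ∧ ∀ π' ∈ CorePoly w, ¬ LexDom π' ρ) → ρ = π T := by
    rintro ρ ⟨hρU, hρopt⟩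
    have h1 : ¬ LexDom (π T) ρ := hρopt (π T) hmemT
    have h2 : ¬ LexDom ρ (π T) := hnoDom ρ hρU
    have h3 : sortVec ρ = sortVec (π T) := by
      by_contra hne
      rcases lexdom_total ρ (π T) hne with h | h
      · exact h2 h
      · exact h1 h
    funext j
    exact hB T hT1 (le_refl T) ρ hρU
      (fun m _ => le_of_eq (congrFun h3 m).symm)
      j (by rw [hTempty]; simp)
  exact ⟨part1, T, hT1, hTle, hTempty, hTne, ⟨hmemT, hnoDom⟩, huniq⟩
end
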